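/- arXiv:1212.2251 — 3 statements merged into one kernel-verified Lean document; each statement's English description precedes it below -/
import Mathlib

section
/- If a module function m is D-safe with respect to hidden attribute sets H1 and H2, then m is D-safe with respect to H1 ∪ H2. Here a module with input attribute set I and output attribute set O is D-safe with respect to a hidden set H if any two inputs that agree on all attributes of I \ H are mapped to outputs that agree on all attributes of O \ H. -/
/-- Two tuples defined on attribute set `B` are equivalent w.r.t. hidden set `H`
iff they agree on every attribute in `B \ H`. -/
def EquivOn {ι : Type*} (V : ι → Type*) (B H : Set ι)
    (x x' : (a : B) → V a.1) : Prop :=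
  ∀ a : B, (a : ι) ∉ H → x a = x' a

/-- A module `m` (from `I`-assignments to `O`-assignments) is downstream-safe
w.r.t. the hidden set `H`. -/
def DSafe {ι : Type*} (V : ι → Type*) (I O : Set ι)
    (m : ((a : I) → V a.1) → ((a : O) → V a.1)) (H : Set ι) : Prop :=
  ∀ x x', EquivOn V I H x x' → EquivOn V O H (m x) (m x')

/-- D-safety w.r.t. `H1` and `H2` implies D-safety w.r.t. `H1 ∪ H2`. -/
theorem dsafe_union {ι : Type*} (V : ι → Type*) (I O : Set ι)
    (hIfin : I.Finite) (hOfin : O.Finite) (hIO : Disjoint I O)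
    (m : ((a : I) → V a.1) → ((a : O) → V a.1)) (H1 H2 : Set ι)
    (h1 : DSafe V I O m H1) (h2 : DSafe V I O m H2) :
    DSafe V I O m (H1 ∪ H2) := by
  classical
  intro x x' hxx
  set y : (a : I) → V a.1 := fun a => if (a : ι) ∈ H1 then x' a else x a with hy
  have hx_y : EquivOn V I H1 x y := by
    intro a ha
    simp [hy, ha]
  have hy_x' : EquivOn V I H2 y x' := by
    intro a ha
    by_cases h : (a : ι) ∈ H1
    · simp [hy, h]
    · have := hxx a (by simp [h, ha])
      simp [hy, h, this]
  intro a ha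
  have ha1 : (a : ι) ∉ H1 := fun h => ha (Or.inl h)
  have ha2 : (a : ι) ∉ H2 := fun h => ha (Or.inr h)
  exact (h1 x y hx_y a ha1).trans (h2 y x' hy_x' a ha2)
end

section
/- The composition of two UD-safe modules is UD-safe with respect to a common hidden set H. -/
def USafe {ι : Type*} (V : ι → Type*) (I O : Set ι)
    (m : ((a : I) → V a.1) → ((a : O) → V a.1)) (H : Set ι) : Prop :=
  ∀ x x', EquivOn V O H (m x) (m x') → EquivOn V I H x x'

def UDSafe {ι : Type*} (V : ι → Type*) (I O : Set ι)
    (m : ((a : I) → V a.1) → ((a : O) → V a.1)) (H : Set ι) : Prop :=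
  DSafe V I O m H ∧ USafe V I O m H

/-- The composition of two UD-safe modules is UD-safe
w.r.t. a common hidden set `H`. -/
theorem udsafe_comp {ι : Type*} (V : ι → Type*) (AX AY AZ : Set ι)
    (hXY : Disjoint AX AY) (hYZ : Disjoint AY AZ) (hXZ : Disjoint AX AZ)
    (m1 : ((a : AX) → V a.1) → ((a : AY) → V a.1))
    (m2 : ((a : AY) → V a.1) → ((a : AZ) → V a.1)) (H : Set ι)
    (h1 : UDSafe V AX AY m1 H) (h2 : UDSafe V AY AZ m2 H) :
    UDSafe V AX AZ (m2 ∘ m1) H :=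
  ⟨fun x x' h => h2.1 _ _ (h1.1 _ _ h), fun x x' h => h1.2 _ _ (h2.2 _ _ h)⟩
end

section
/- If a constant module m1 precedes a private module m2 in a chain (m2's input equals m1's output) and all of m2's input attributes are hidden while m2's outputs are visible, then m2 is only 1-workflow-private: in every possible world of the chain relation that fixes the public constant module m1, the output of m2 on the (unique) realized input is determined. -/
/-- In a two-module chain where the public first module `m1` is a
constant function and all input attributes of the private module `m2` (the `B`
column) are hidden, the output of `m2` on the realized input is determined in
every possible world: `m2` is only 1-workflow-private.  Tuples of the chain
relation are represented as triples `(a, b, c)` of the `A`, `B`, `C` values. -/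
theorem constant_predecessor_no_privacy {α β γ : Type*}
    (m1 : α → β) (b0 : β) (hconst : ∀ a, m1 a = b0)
    (m2 : β → γ)
    (R' : Set (α × β × γ))
    -- functional dependency A → B
    (hFD1 : ∀ t ∈ R', ∀ s ∈ R', t.1 = s.1 → t.2.1 = s.2.1)
    -- functional dependency B → C
    (hFD2 : ∀ t ∈ R', ∀ s ∈ R', t.2.1 = s.2.1 → t.2.2 = s.2.2)
    -- the public module m1 computes the B column
    (hpub : ∀ t ∈ R', t.2.1 = m1 t.1)
    -- R' agrees with R = {(a, m1 a, m2 (m1 a))} on the visible A, C columns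
    (hproj : {v | ∃ t ∈ R', v = (t.1, t.2.2)} =
             {v | ∃ a : α, v = (a, m2 (m1 a))}) :
    ∀ t ∈ R', t.2.2 = m2 b0 := by
  intro t ht
  have hm : (t.1, t.2.2) ∈ {v : α × γ | ∃ a : α, v = (a, m2 (m1 a))} := by
    rw [← hproj]; exact ⟨t, ht, rfl⟩
  obtain ⟨a, ha⟩ := hm
  have := congrArg Prod.snd ha
  simpa [hconst a] using this
end
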